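/- Let F be a finite extension of ℚ_p and L a biquadratic extension of F with distinct quadratic intermediate fields K, K', K''. Assume: N_{L/K}(L^*) has index 2 in K^*; N_{K/F}(K^*), N_{K'/F}(K'^*), N_{K''/F}(K''^*) are pairwise distinct subgroups of index 2 in F^*, each containing N_{L/F}(L^*); and N_{L/F}(L^*) has index 4 in F^*. Let η_{L/K} : K^* → ℂ^* be a group homomorphism with kernel exactly N_{L/K}(L^*), and let η', η'' : F^* → ℂ^* be group homomorphisms with kernels exactly N_{K'/F}(K'^*) and N_{K''/F}(K''^*) respectively. Then for a group homomorphism μ : K^* → ℂ^*, one has μ ∘ N_{K/F} = η_{L/K} if and only if the restriction of μ to F^* equals η' or equals η''. -/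

import Mathlib

private lemma aux_eq_of_le_of_index_eq {G : Type*} [Group G] {A B : Subgroup G}
    (h : A ≤ B) (hAB : A.index = B.index) (hB : B.index ≠ 0) : A = B := by
  have h1 := Subgroup.relIndex_mul_index h
  rw [hAB] at h1
  have : A.relIndex B = 1 :=
    Nat.eq_of_mul_eq_mul_right (Nat.pos_of_ne_zero hB) (by simpa using h1)
  exact le_antisymm h (Subgroup.relIndex_eq_one.mp this)

private lemma aux_two_or_four {d : ℕ} (h1 : d ∣ 4) (h2 : 2 ∣ d) : d = 2 ∨ d = 4 := by
  have hle : d ≤ 4 := Nat.le_of_dvd (by norm_num) h1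
  interval_cases d <;> omega

/-- In an abelian group, the product of two elements outside an index-2 subgroup
lies in the subgroup. -/
private lemma aux_mul_mem_of_index_two {G : Type*} [CommGroup G] {H : Subgroup G}
    (hH : H.index = 2) {a b : G} (ha : a ∉ H) (hb : b ∉ H) : a * b ∈ H := by
  obtain ⟨c, hc⟩ := Subgroup.index_eq_two_iff.mp hH
  have hcc : c * c ∈ H := by
    rcases hc c with ⟨h1, h2⟩ | ⟨h1, h2⟩
    · exact h1
    · exact H.mul_mem h1 h1
  have h1 : a * c ∈ H := by
    rcases hc a with ⟨h1, _⟩ | ⟨h1, _⟩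
    · exact h1
    · exact absurd h1 ha
  have h2 : b * c ∈ H := by
    rcases hc b with ⟨h1, _⟩ | ⟨h1, _⟩
    · exact h1
    · exact absurd h1 hb
  have h3 : a * c * (b * c) ∈ H := H.mul_mem h1 h2
  rw [mul_mul_mul_comm] at h3
  have h4 : a * b * (c * c) * (c * c)⁻¹ ∈ H := H.mul_mem h3 (H.inv_mem hcc)
  rwa [mul_inv_cancel_right] at h4

/-- A character into `ℂˣ` whose kernel has index 2 is determined by its kernel. -/
private lemma aux_char_eq {G : Type*} [CommGroup G] {f g : G →* ℂˣ}
    (hker : f.ker = g.ker) (hidx : f.ker.index = 2) : f = g := by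
  have key : ∀ (h : G →* ℂˣ) (x : G), x ^ 2 ∈ h.ker → x ∉ h.ker → h x = -1 := by
    intro h x hx2 hx
    have h2u : (h x) ^ 2 = 1 := by rw [← map_pow]; exact hx2
    have h2 : ((h x : ℂ)) ^ 2 = 1 := by
      rw [← Units.val_pow_eq_pow_val, h2u, Units.val_one]
    rcases sq_eq_one_iff.mp h2 with h1 | h1
    · exact absurd (Units.ext h1) hx
    · exact Units.ext h1
  ext x
  by_cases hx : x ∈ f.ker
  · rw [MonoidHom.mem_ker.mp hx, MonoidHom.mem_ker.mp (hker ▸ hx)]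
  · have hx2 : x ^ 2 ∈ f.ker := by
      have := f.ker.pow_index_mem x
      rwa [hidx] at this
    rw [key f x hx2 hx, key g x (hker ▸ hx2) (hker ▸ hx)]
/-- For `L/F` biquadratic with quadratic intermediate fields `K, K', K''` and a
character `μ` of `K^*`: `μ ∘ N_{K/F} = η_{L/K}` iff the restriction of `μ` to `F^*`
equals `η' = η_{K'/F}` or `η'' = η_{K''/F}`. -/
theorem stmt_12 (p : ℕ) [Fact p.Prime]
    (F K K' K'' L : Type*) [Field F] [Field K] [Field K'] [Field K''] [Field L]
    [Algebra ℚ_[p] F] [FiniteDimensional ℚ_[p] F]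
    [Algebra F K] [Algebra F K'] [Algebra F K''] [Algebra F L]
    [Algebra K L] [Algebra K' L] [Algebra K'' L]
    [IsScalarTower F K L] [IsScalarTower F K' L] [IsScalarTower F K'' L]
    [IsGalois F L] (hL : Module.finrank F L = 4)
    (hGal : Nonempty ((L ≃ₐ[F] L) ≃* Multiplicative (ZMod 2 × ZMod 2)))
    (hK : Module.finrank F K = 2) (hK' : Module.finrank F K' = 2)
    (hK'' : Module.finrank F K'' = 2)
    (hd1 : (IsScalarTower.toAlgHom F K L).fieldRange ≠
      (IsScalarTower.toAlgHom F K' L).fieldRange)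
    (hd2 : (IsScalarTower.toAlgHom F K L).fieldRange ≠
      (IsScalarTower.toAlgHom F K'' L).fieldRange)
    (hd3 : (IsScalarTower.toAlgHom F K' L).fieldRange ≠
      (IsScalarTower.toAlgHom F K'' L).fieldRange)
    -- `N_{L/K}(L^*)` has index 2 in `K^*`
    (hLK : ((Units.map (Algebra.norm K : L →* K)).range : Subgroup Kˣ).index = 2)
    -- the three norm groups in `F^*` are pairwise distinct, of index 2, and contain
    -- `N_{L/F}(L^*)`
    (hne1 : (Units.map (Algebra.norm F : K →* F)).range ≠
      (Units.map (Algebra.norm F : K' →* F)).range)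
    (hne2 : (Units.map (Algebra.norm F : K →* F)).range ≠
      (Units.map (Algebra.norm F : K'' →* F)).range)
    (hne3 : (Units.map (Algebra.norm F : K' →* F)).range ≠
      (Units.map (Algebra.norm F : K'' →* F)).range)
    (hiK : ((Units.map (Algebra.norm F : K →* F)).range : Subgroup Fˣ).index = 2)
    (hiK' : ((Units.map (Algebra.norm F : K' →* F)).range : Subgroup Fˣ).index = 2)
    (hiK'' : ((Units.map (Algebra.norm F : K'' →* F)).range : Subgroup Fˣ).index = 2)
    (hcK : (Units.map (Algebra.norm F : L →* F)).range ≤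
      (Units.map (Algebra.norm F : K →* F)).range)
    (hcK' : (Units.map (Algebra.norm F : L →* F)).range ≤
      (Units.map (Algebra.norm F : K' →* F)).range)
    (hcK'' : (Units.map (Algebra.norm F : L →* F)).range ≤
      (Units.map (Algebra.norm F : K'' →* F)).range)
    -- `N_{L/F}(L^*)` has index 4 in `F^*`
    (hiL : ((Units.map (Algebra.norm F : L →* F)).range : Subgroup Fˣ).index = 4)
    (η : Kˣ →* ℂˣ) (hη : η.ker = (Units.map (Algebra.norm K : L →* K)).range)
    (η' : Fˣ →* ℂˣ) (hη' : η'.ker = (Units.map (Algebra.norm F : K' →* F)).range)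
    (η'' : Fˣ →* ℂˣ) (hη'' : η''.ker = (Units.map (Algebra.norm F : K'' →* F)).range)
    (μ : Kˣ →* ℂˣ) :
    (∀ x : Kˣ, μ (Units.map (algebraMap F K : F →* K)
        (Units.map (Algebra.norm F : K →* F) x)) = η x) ↔
    ((∀ x : Fˣ, μ (Units.map (algebraMap F K : F →* K) x) = η' x) ∨
     (∀ x : Fˣ, μ (Units.map (algebraMap F K : F →* K) x) = η'' x)) := by
  set N : Kˣ →* Fˣ := Units.map (Algebra.norm F : K →* F) with hN
  set Nl : Lˣ →* Kˣ := Units.map (Algebra.norm K : L →* K) with hNl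
  set NL : Lˣ →* Fˣ := Units.map (Algebra.norm F : L →* F) with hNL
  set ι : Fˣ →* Kˣ := Units.map (algebraMap F K : F →* K) with hι
  set GK : Subgroup Fˣ := N.range with hGK
  set GK' : Subgroup Fˣ := (Units.map (Algebra.norm F : K' →* F)).range with hGK'
  set GK'' : Subgroup Fˣ := (Units.map (Algebra.norm F : K'' →* F)).range with hGK''
  set Gl : Subgroup Fˣ := NL.range with hGl
  -- norm transitivity at the level of units
  have htrans : ∀ z : Lˣ, N (Nl z) = NL z := by
    intro z
    ext
    simp only [hN, hNl, hNL, Units.coe_map, MonoidHom.coe_coe]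
    exact Algebra.norm_norm (R := F) (S := K) (A := L) (a := (z : L))
  -- the meet of any two of the three index-2 norm groups is `Gl`
  have hmeet : ∀ G0 G1 : Subgroup Fˣ, G0.index = 2 → G1.index = 2 → G0 ≠ G1 →
      Gl ≤ G0 → Gl ≤ G1 → G0 ⊓ G1 = Gl := by
    intro G0 G1 hi0 hi1 hne0 hc0 hc1
    have hle : Gl ≤ G0 ⊓ G1 := le_inf hc0 hc1
    have hdvd1 : (G0 ⊓ G1).index ∣ Gl.index := Subgroup.index_dvd_of_le hle
    have hdvd2 : G0.index ∣ (G0 ⊓ G1).index := Subgroup.index_dvd_of_le inf_le_left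
    rw [hiL] at hdvd1; rw [hi0] at hdvd2
    rcases aux_two_or_four hdvd1 hdvd2 with h2 | h4
    · exfalso
      have e1 : G0 ⊓ G1 = G0 :=
        aux_eq_of_le_of_index_eq inf_le_left (by rw [h2, hi0]) (by omega)
      have e2 : G0 ≤ G1 := e1 ▸ inf_le_right
      exact hne0 (aux_eq_of_le_of_index_eq e2 (by rw [hi0, hi1]) (by omega))
    · exact (aux_eq_of_le_of_index_eq hle (by rw [hiL, h4]) (by omega)).symm
  -- the comap under N of either GK' or GK'' is the norm group of L/K
  have hcomap : ∀ G0 : Subgroup Fˣ, G0.index = 2 → GK ≠ G0 → Gl ≤ G0 →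
      G0.comap N = Nl.range := by
    intro G0 hi0 hne0 hc0
    have hle : Nl.range ≤ G0.comap N := by
      rintro y ⟨z, hz⟩
      subst hz
      rw [Subgroup.mem_comap, htrans z]
      exact hc0 ⟨z, rfl⟩
    have hidx : (G0.comap N).index = 2 := by
      rw [Subgroup.index_comap]
      have hdvd : G0.relIndex N.range ∣ G0.index :=
        Subgroup.relIndex_dvd_index_of_normal G0 N.range
      rw [hi0] at hdvd
      rcases (Nat.prime_two.eq_one_or_self_of_dvd _ hdvd) with h1 | h1
      · exfalso
        have hle2 : GK ≤ G0 := Subgroup.relIndex_eq_one.mp h1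
        exact hne0 (aux_eq_of_le_of_index_eq hle2 (by rw [hiK, hi0]) (by omega))
      · exact h1
    exact (aux_eq_of_le_of_index_eq hle (by rw [hidx, hLK]) (by omega)).symm
  have hηidx : η.ker.index = 2 := by rw [hη]; exact hLK
  constructor
  · -- forward direction
    intro h
    set ν : Fˣ →* ℂˣ := μ.comp ι with hν
    have hνN : ν.comp N = η := MonoidHom.ext fun x => h x
    have hkercomap : ν.ker.comap N = Nl.range := by
      rw [← hη, ← hνN]; rfl
    have hGlmeet : GK ⊓ GK' = Gl := hmeet GK GK' hiK hiK' hne1 hcK hcK'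
    have hsq : ∀ x : Fˣ, x ^ 2 ∈ Gl := by
      intro x
      rw [← hGlmeet]
      constructor
      · have := GK.pow_index_mem x; rwa [hiK] at this
      · have := GK'.pow_index_mem x; rwa [hiK'] at this
    have hGlker : Gl ≤ ν.ker := by
      rintro y ⟨z, hz⟩
      subst hz
      have hmem : Nl z ∈ ν.ker.comap N := by
        rw [hkercomap]; exact ⟨z, rfl⟩
      rw [Subgroup.mem_comap, htrans z] at hmem
      exact hmem
    have hval : ∀ x : Fˣ, x ∉ ν.ker → ν x = -1 := by
      intro x hx
      have h2u : (ν x) ^ 2 = 1 := by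
        rw [← map_pow]
        exact hGlker (hsq x)
      have h2 : ((ν x : ℂ)) ^ 2 = 1 := by
        rw [← Units.val_pow_eq_pow_val, h2u, Units.val_one]
      rcases sq_eq_one_iff.mp h2 with h1 | h1
      · exact absurd (Units.ext h1) hx
      · exact Units.ext h1
    have hLKne : Nl.range ≠ (⊤ : Subgroup Kˣ) := by
      intro hc
      rw [hc, Subgroup.index_top] at hLK
      omega
    have hkerne_top : ν.ker ≠ ⊤ := by
      intro hc
      rw [hc, Subgroup.comap_top] at hkercomap
      exact hLKne hkercomap.symm
    have hkerneGK : ν.ker ≠ GK := by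
      intro hc
      rw [hc] at hkercomap
      have htop : GK.comap N = ⊤ := (Subgroup.eq_top_iff' _).mpr fun x => ⟨x, rfl⟩
      rw [htop] at hkercomap
      exact hLKne hkercomap.symm
    obtain ⟨a, ha⟩ : ∃ a : Fˣ, a ∉ ν.ker := by
      by_contra hc
      push_neg at hc
      exact hkerne_top ((Subgroup.eq_top_iff' _).mpr hc)
    have hkeridx : ν.ker.index = 2 := by
      rw [Subgroup.index_eq_two_iff]
      refine ⟨a, fun b => ?_⟩
      by_cases hb : b ∈ ν.ker
      · refine Or.inr ⟨hb, fun hba => ha ?_⟩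
        have := ν.ker.mul_mem (ν.ker.inv_mem hb) hba
        simpa using this
      · refine Or.inl ⟨?_, hb⟩
        refine MonoidHom.mem_ker.mpr ?_
        rw [map_mul, hval b hb, hval a ha]
        exact Units.ext (by push_cast; ring)
    -- kernel of ν equals GK' or GK''
    have hcases : ν.ker = GK' ∨ ν.ker = GK'' := by
      by_contra hc
      push_neg at hc
      obtain ⟨hc1, hc2⟩ := hc
      obtain ⟨b, hbmem, hbnot⟩ : ∃ b : Fˣ, b ∈ GK' ∧ b ∉ Gl := by
        by_contra hcb
        push_neg at hcb
        have hle : GK' ≤ Gl := hcb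
        have hdvd := Subgroup.index_dvd_of_le hle
        rw [hiL, hiK'] at hdvd
        norm_num at hdvd
      obtain ⟨c, hcmem, hcnot⟩ : ∃ c : Fˣ, c ∈ GK'' ∧ c ∉ Gl := by
        by_contra hcb
        push_neg at hcb
        have hle : GK'' ≤ Gl := hcb
        have hdvd := Subgroup.index_dvd_of_le hle
        rw [hiL, hiK''] at hdvd
        norm_num at hdvd
      have hbν : b ∉ ν.ker := fun hbk => hbnot (by
        rw [← hmeet ν.ker GK' hkeridx hiK' hc1 hGlker hcK']
        exact ⟨hbk, hbmem⟩)
      have hcν : c ∉ ν.ker := fun hck => hcnot (by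
        rw [← hmeet ν.ker GK'' hkeridx hiK'' hc2 hGlker hcK'']
        exact ⟨hck, hcmem⟩)
      have hbcν : b * c ∈ ν.ker := by
        refine MonoidHom.mem_ker.mpr ?_
        rw [map_mul, hval b hbν, hval c hcν]
        exact Units.ext (by push_cast; ring)
      have hGmeet : GK' ⊓ GK'' = Gl := hmeet GK' GK'' hiK' hiK'' hne3 hcK' hcK''
      have hcK'm : c ∉ GK' := fun hx => hcnot (hGmeet ▸ ⟨hx, hcmem⟩)
      have hbcK' : b * c ∉ GK' := fun hx => hcK'm (by
        have := GK'.mul_mem (GK'.inv_mem hbmem) hx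
        simpa using this)
      have hbK : b ∉ GK := fun hx => hbnot (hGlmeet ▸ ⟨hx, hbmem⟩)
      have hcGK : c ∉ GK := fun hx =>
        hcnot ((hmeet GK GK'' hiK hiK'' hne2 hcK hcK'') ▸ ⟨hx, hcmem⟩)
      have hbcGK : b * c ∈ GK := aux_mul_mem_of_index_two hiK hbK hcGK
      have hfin : b * c ∈ Gl := by
        rw [← hmeet ν.ker GK hkeridx hiK hkerneGK hGlker hcK]
        exact ⟨hbcν, hbcGK⟩
      exact hbcK' (hcK' hfin)
    rcases hcases with hk | hk
    · left
      have hfe : ν = η' := aux_char_eq (by rw [hk, hη']) (by rw [hk, hiK'])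
      intro x
      exact DFunLike.congr_fun hfe x
    · right
      have hfe : ν = η'' := aux_char_eq (by rw [hk, hη'']) (by rw [hk, hiK''])
      intro x
      exact DFunLike.congr_fun hfe x
  · -- backward direction
    rintro (h | h)
    · have hν : μ.comp ι = η' := MonoidHom.ext fun x => h x
      have hker : (η'.comp N).ker = η.ker := by
        have hck : (η'.comp N).ker = η'.ker.comap N := rfl
        rw [hck, hη', hη]
        exact hcomap GK' hiK' hne1 hcK'
      have hfe : η'.comp N = η := aux_char_eq hker (by rw [hker]; exact hηidx)
      intro x
      have e1 : μ (ι (N x)) = η' (N x) := DFunLike.congr_fun hν (N x)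
      rw [e1]
      exact DFunLike.congr_fun hfe x
    · have hν : μ.comp ι = η'' := MonoidHom.ext fun x => h x
      have hker : (η''.comp N).ker = η.ker := by
        have hck : (η''.comp N).ker = η''.ker.comap N := rfl
        rw [hck, hη'', hη]
        exact hcomap GK'' hiK'' hne2 hcK''
      have hfe : η''.comp N = η := aux_char_eq hker (by rw [hker]; exact hηidx)
      intro x
      have e1 : μ (ι (N x)) = η'' (N x) := DFunLike.congr_fun hν (N x)
      rw [e1]
      exact DFunLike.congr_fun hfe x
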